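/- Let $d \geq 2$ and let $F_1, \ldots, F_d$ be the recursively defined $2^{d-1} \times 2^{d-1}$ anti-commuting self-adjoint unitaries. Then for every $y \in \mathbb{R}^d$, $\left\| \sum_{j=1}^d (F_j - y_j I) \otimes F_j \right\| \geq \sqrt{\|y\|_2^2 + (d-1)^2} + 1$. -/

import Mathlib

open Matrix Kronecker

noncomputable def pauliX : Matrix (Fin 2) (Fin 2) ℂ := !![0, 1; 1, 0]
noncomputable def pauliZ : Matrix (Fin 2) (Fin 2) ℂ := !![1, 0; 0, -1]

/-- The recursively defined matrices `F j ^ [d]` of size `2 ^ (d-1)`: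
`F 1 ^ [1] = 1`, `F j ^ [d] = σₓ ⊗ F j ^ [d-1]` for `j < d`, and `F d ^ [d] = σ_z ⊗ I`. -/
noncomputable def Fmat : (d : ℕ) → Fin d → Matrix (Fin (2 ^ (d - 1))) (Fin (2 ^ (d - 1))) ℂ
  | 0 => fun j => j.elim0
  | 1 => fun _ => 1
  | (d + 2) => fun j =>
    if h : (j : ℕ) < d + 1 then
      Matrix.reindex
        (finProdFinEquiv.trans (finCongr (by rw [show d + 1 - 1 = d from rfl,
          show d + 2 - 1 = d + 1 from rfl, pow_succ]; ring)))
        (finProdFinEquiv.trans (finCongr (by rw [show d + 1 - 1 = d from rfl,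
          show d + 2 - 1 = d + 1 from rfl, pow_succ]; ring)))
        (pauliX ⊗ₖ Fmat (d + 1) ⟨j, h⟩)
    else
      Matrix.reindex
        (finProdFinEquiv.trans (finCongr (by rw [show d + 2 - 1 = d + 1 from rfl, pow_succ]; ring)))
        (finProdFinEquiv.trans (finCongr (by rw [show d + 2 - 1 = d + 1 from rfl, pow_succ]; ring)))
        (pauliZ ⊗ₖ (1 : Matrix (Fin (2 ^ d)) (Fin (2 ^ d)) ℂ))

noncomputable def eqvF (m : ℕ) : Fin 2 × Fin (2 ^ m) ≃ Fin (2 ^ (m + 1)) :=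
  finProdFinEquiv.trans (finCongr (by rw [pow_succ]; ring))

lemma Fmat_lt (m : ℕ) (j : Fin (m + 2)) (h : (j : ℕ) < m + 1) :
    Fmat (m + 2) j = Matrix.reindex (eqvF m) (eqvF m) (pauliX ⊗ₖ Fmat (m + 1) ⟨j, h⟩) := by
  simp only [Fmat, dif_pos h]; rfl

lemma Fmat_last (m : ℕ) (j : Fin (m + 2)) (h : ¬ (j : ℕ) < m + 1) :
    Fmat (m + 2) j = Matrix.reindex (eqvF m) (eqvF m)
      (pauliZ ⊗ₖ (1 : Matrix (Fin (2 ^ m)) (Fin (2 ^ m)) ℂ)) := by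
  simp only [Fmat, dif_neg h]; rfl

lemma reindex_mul_reindex {α β : Type*} [Fintype α] [Fintype β] [DecidableEq α] [DecidableEq β]
    (e : α ≃ β) (A B : Matrix α α ℂ) :
    (Matrix.reindex e e A) * (Matrix.reindex e e B) = Matrix.reindex e e (A * B) := by
  simp [Matrix.reindex_apply, Matrix.submatrix_mul_equiv]

lemma reindex_one' {α β : Type*} [Fintype α] [Fintype β] [DecidableEq α] [DecidableEq β]
    (e : α ≃ β) : (Matrix.reindex e e (1 : Matrix α α ℂ)) = 1 := by
  simp [Matrix.reindex_apply, Matrix.submatrix_one_equiv]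

lemma neg_kron {α β : Type*} (A : Matrix α α ℂ) (B : Matrix β β ℂ) :
    (-A) ⊗ₖ B = -(A ⊗ₖ B) := by
  ext ⟨i,k⟩ ⟨j,l⟩; simp [Matrix.kroneckerMap_apply]

lemma kron_neg {α β : Type*} (A : Matrix α α ℂ) (B : Matrix β β ℂ) :
    A ⊗ₖ (-B) = -(A ⊗ₖ B) := by
  ext ⟨i,k⟩ ⟨j,l⟩; simp [Matrix.kroneckerMap_apply]

lemma reindex_neg {α β : Type*} [Fintype α] [Fintype β] [DecidableEq α] [DecidableEq β]
    (e : α ≃ β) (A : Matrix α α ℂ) :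
    Matrix.reindex e e (-A) = - Matrix.reindex e e A := by
  ext i j; simp

lemma pauliX_sq : pauliX * pauliX = 1 := by
  simp [pauliX, Matrix.mul_fin_two, Matrix.one_fin_two]

lemma pauliZ_sq : pauliZ * pauliZ = 1 := by
  simp [pauliZ, Matrix.mul_fin_two, Matrix.one_fin_two]

lemma pauliXZ : pauliX * pauliZ = - (pauliZ * pauliX) := by
  simp [pauliX, pauliZ, Matrix.mul_fin_two]

lemma pauliX_transpose : pauliXᵀ = pauliX := by
  ext i j; fin_cases i <;> fin_cases j <;> rfl

lemma pauliZ_transpose : pauliZᵀ = pauliZ := by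
  ext i j; fin_cases i <;> fin_cases j <;> rfl

lemma Fmat_sq : ∀ (d : ℕ) (j : Fin d), Fmat d j * Fmat d j = 1 := by
  intro d
  induction d with
  | zero => exact fun j => j.elim0
  | succ n ih =>
    cases n with
    | zero => intro j; show (1 : Matrix (Fin 1) (Fin 1) ℂ) * 1 = 1; simp
    | succ m =>
      intro j
      by_cases h : (j : ℕ) < m + 1
      · rw [Fmat_lt m j h, reindex_mul_reindex, ← Matrix.mul_kronecker_mul,
          pauliX_sq, ih, Matrix.one_kronecker_one, reindex_one']
      · rw [Fmat_last m j h, reindex_mul_reindex, ← Matrix.mul_kronecker_mul,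
          pauliZ_sq, one_mul, Matrix.one_kronecker_one, reindex_one']

lemma Fmat_anticomm : ∀ (d : ℕ) (j k : Fin d), j ≠ k →
    Fmat d j * Fmat d k = - (Fmat d k * Fmat d j) := by
  intro d
  induction d with
  | zero => exact fun j => j.elim0
  | succ n ih =>
    cases n with
    | zero =>
      intro j k hjk
      exact absurd (Fin.ext (by omega)) hjk
    | succ m =>
      intro j k hjk
      by_cases h : (j : ℕ) < m + 1 <;> by_cases h' : (k : ℕ) < m + 1
      · rw [Fmat_lt m j h, Fmat_lt m k h', reindex_mul_reindex, reindex_mul_reindex,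
          ← Matrix.mul_kronecker_mul, ← Matrix.mul_kronecker_mul,
          ih _ _ (fun hh => hjk (by
            have := congrArg Fin.val hh
            exact Fin.ext (by simpa using this))),
          kron_neg, reindex_neg]
      · rw [Fmat_lt m j h, Fmat_last m k h', reindex_mul_reindex, reindex_mul_reindex,
          ← Matrix.mul_kronecker_mul, ← Matrix.mul_kronecker_mul,
          mul_one, one_mul, pauliXZ, neg_kron, reindex_neg]
      · rw [Fmat_last m j h, Fmat_lt m k h', reindex_mul_reindex, reindex_mul_reindex,
          ← Matrix.mul_kronecker_mul, ← Matrix.mul_kronecker_mul,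
          mul_one, one_mul, ← neg_neg (pauliZ * pauliX), ← pauliXZ, neg_kron, reindex_neg]
      · exact absurd (Fin.ext (by omega)) hjk

lemma Fmat_transpose : ∀ (d : ℕ) (j : Fin d), (Fmat d j)ᵀ = Fmat d j := by
  intro d
  induction d with
  | zero => exact fun j => j.elim0
  | succ n ih =>
    cases n with
    | zero => intro j; show (1 : Matrix (Fin 1) (Fin 1) ℂ)ᵀ = 1; simp
    | succ m =>
      intro j
      by_cases h : (j : ℕ) < m + 1
      · rw [Fmat_lt m j h]
        refine (Matrix.transpose_reindex _ _ _).trans ?_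
        congr 1
        rw [← Matrix.kroneckerMap_transpose, pauliX_transpose, ih]
      · rw [Fmat_last m j h]
        refine (Matrix.transpose_reindex _ _ _).trans ?_
        congr 1
        rw [← Matrix.kroneckerMap_transpose, pauliZ_transpose, Matrix.transpose_one]

lemma kron_mulVec {N : Type*} [Fintype N] (A B C : Matrix N N ℂ) :
    (A ⊗ₖ B) *ᵥ (fun p => C p.1 p.2) = fun p => (A * C * Bᵀ) p.1 p.2 := by
  ext ⟨i, k⟩
  simp only [Matrix.mulVec, dotProduct, Fintype.sum_prod_type,
    Matrix.kroneckerMap_apply, Matrix.mul_apply, Matrix.transpose_apply,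
    Finset.sum_mul, Finset.mul_sum]
  rw [Finset.sum_comm]
  exact Finset.sum_congr rfl fun l _ => Finset.sum_congr rfl fun j _ => by ring

lemma sum_mulVec' {N ι : Type*} [Fintype N] (s : Finset ι) (A : ι → Matrix N N ℂ) (x : N → ℂ) :
    (∑ i ∈ s, A i) *ᵥ x = ∑ i ∈ s, (A i *ᵥ x) := by
  ext j
  simp only [Matrix.mulVec, dotProduct, Finset.sum_apply, Matrix.sum_apply,
    Finset.sum_mul]
  rw [Finset.sum_comm]

/-- For the recursively defined anti-commuting self-adjoint unitaries `F 1, …, F d`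
(`d ≥ 2`) and any `y ∈ ℝ^d`, the operator norm of `∑ j, (F j - y j • I) ⊗ F j` is at
least `√(‖y‖² + (d-1)²) + 1`. -/
theorem Fmat_shifted_kron_sum_norm_lower_bound (d : ℕ) (hd : 2 ≤ d)
    (y : EuclideanSpace ℝ (Fin d)) :
    Real.sqrt (‖y‖ ^ 2 + ((d : ℝ) - 1) ^ 2) + 1 ≤
      ‖Matrix.toEuclideanCLM (𝕜 := ℂ)
        ((∑ j : Fin d, (Fmat d j - (y j : ℂ) • 1) ⊗ₖ Fmat d j :
          Matrix (Fin (2 ^ (d - 1)) × Fin (2 ^ (d - 1)))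
            (Fin (2 ^ (d - 1)) × Fin (2 ^ (d - 1))) ℂ))‖ := by
  classical
  set n := 2 ^ (d - 1) with hn
  set s : ℝ := Real.sqrt (‖y‖ ^ 2 + ((d : ℝ) - 1) ^ 2) with hs
  have hs0 : 0 ≤ s := Real.sqrt_nonneg _
  have hs2 : s ^ 2 = ‖y‖ ^ 2 + ((d : ℝ) - 1) ^ 2 := Real.sq_sqrt (by positivity)
  set c : ℝ := s + (d : ℝ) - 1 with hc
  set lam : ℝ := s + 1 with hlam
  set F : Fin d → Matrix (Fin n) (Fin n) ℂ := Fmat d with hF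
  set G : Matrix (Fin n) (Fin n) ℂ := ∑ m, (y m : ℂ) • F m with hG
  set M : Matrix (Fin n) (Fin n) ℂ := (c : ℂ) • 1 - G with hM
  have hsq : ∀ m, F m * F m = 1 := Fmat_sq d
  have hadd : ∀ j k : Fin d, F j * F k + F k * F j = if j = k then (2:ℂ) • 1 else 0 := by
    intro j k
    by_cases h : j = k
    · subst h; rw [if_pos rfl, hsq, two_smul]
    · rw [if_neg h, Fmat_anticomm d j k h, neg_add_cancel]
  have hnorm : ‖y‖ ^ 2 = ∑ m, (y m) ^ 2 := by
    rw [EuclideanSpace.norm_eq, Real.sq_sqrt (by positivity)]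
    exact Finset.sum_congr rfl fun m _ => by rw [Real.norm_eq_abs, sq_abs]
  have hFG : ∀ m, F m * G + G * F m = ((2 * y m : ℝ) : ℂ) • 1 := by
    intro m
    rw [hG, Finset.mul_sum, Finset.sum_mul, ← Finset.sum_add_distrib]
    have h1 : ∀ k ∈ Finset.univ, F m * ((y k : ℂ) • F k) + ((y k : ℂ) • F k) * F m
        = (y k : ℂ) • (if m = k then (2:ℂ) • (1 : Matrix (Fin n) (Fin n) ℂ) else 0) := by
      intro k _
      rw [mul_smul_comm, smul_mul_assoc, ← smul_add, hadd]
    rw [Finset.sum_congr rfl h1]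
    simp only [smul_ite, smul_zero, Finset.sum_ite_eq, Finset.mem_univ, if_true]
    rw [smul_smul]
    push_cast
    ring_nf
  have hGF : ∀ m, F m * G = ((2 * y m : ℝ) : ℂ) • 1 - G * F m :=
    fun m => eq_sub_of_add_eq (hFG m)
  have h2GG : G * G + G * G = ((2 * ‖y‖ ^ 2 : ℝ) : ℂ) • 1 := by
    have e1 : G * G = ∑ m, (y m : ℂ) • (F m * G) := by
      rw [hG, Finset.sum_mul]
      exact Finset.sum_congr rfl fun m _ => smul_mul_assoc _ _ _
    have e2 : G * G = ∑ m, (y m : ℂ) • (G * F m) := by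
      conv_lhs => rw [hG, Finset.mul_sum]
      exact Finset.sum_congr rfl fun m _ => mul_smul_comm _ _ _
    calc G * G + G * G = ∑ m, (y m : ℂ) • (F m * G + G * F m) := by
          nth_rewrite 1 [e1]
          nth_rewrite 1 [e2]
          rw [← Finset.sum_add_distrib]
          exact Finset.sum_congr rfl fun m _ => (smul_add _ _ _).symm
      _ = ∑ m, ((y m : ℂ) * ((2 * y m : ℝ) : ℂ)) • (1 : Matrix (Fin n) (Fin n) ℂ) := by
          exact Finset.sum_congr rfl fun m _ => by rw [hFG, smul_smul]
      _ = (∑ m, ((y m : ℂ) * ((2 * y m : ℝ) : ℂ))) • 1 := (Finset.sum_smul).symm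
      _ = ((2 * ‖y‖ ^ 2 : ℝ) : ℂ) • 1 := by
          congr 1
          push_cast [hnorm]
          rw [Finset.mul_sum]
          exact Finset.sum_congr rfl fun m _ => by ring
  have hGG : G * G = ((‖y‖ ^ 2 : ℝ) : ℂ) • 1 := by
    have h2 : (2 : ℂ) • (G * G) = (2 : ℂ) • (((‖y‖ ^ 2 : ℝ) : ℂ) • (1 : Matrix (Fin n) (Fin n) ℂ)) := by
      rw [two_smul, h2GG, smul_smul]
      push_cast
      ring_nf
    exact smul_right_injective _ two_ne_zero h2
  have hFGF : ∀ m, F m * G * F m = ((2 * y m : ℝ) : ℂ) • F m - G := by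
    intro m
    calc F m * G * F m = (((2 * y m : ℝ) : ℂ) • 1 - G * F m) * F m := by rw [hGF m]
      _ = ((2 * y m : ℝ) : ℂ) • F m - G * (F m * F m) := by
          rw [sub_mul, smul_mul_assoc, one_mul, mul_assoc]
      _ = _ := by rw [hsq, mul_one]
  -- the key algebraic identity
  have key : ∑ m, (F m - (y m : ℂ) • 1) * (M * F m) = ((lam : ℝ) : ℂ) • M := by
    have hterm : ∀ m ∈ (Finset.univ : Finset (Fin d)),
        (F m - (y m : ℂ) • 1) * (M * F m)
        = ((c : ℂ) • (1 : Matrix (Fin n) (Fin n) ℂ) - (((2 * y m : ℝ) : ℂ) • F m - G))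
          - ((y m : ℂ) * (c : ℂ)) • F m + (y m : ℂ) • (G * F m) := by
      intro m _
      have e1 : M * F m = (c : ℂ) • F m - G * F m := by
        rw [hM, sub_mul, smul_mul_assoc, one_mul]
      rw [e1, sub_mul, mul_sub, mul_sub, smul_mul_assoc, smul_mul_assoc, one_mul,
        mul_smul_comm, ← mul_assoc, hFGF, smul_smul, hsq]
      simp only [one_mul]
      module
    rw [Finset.sum_congr rfl hterm]
    have S1 : ∑ _m : Fin d, ((c : ℂ) • (1 : Matrix (Fin n) (Fin n) ℂ)) = ((d : ℝ) : ℂ) • ((c:ℂ) • 1) := by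
      rw [Finset.sum_const, Finset.card_univ, Fintype.card_fin]
      push_cast
      rw [← Nat.cast_smul_eq_nsmul ℂ]
    have S2 : ∑ m : Fin d, (((2 * y m : ℝ) : ℂ) • F m) = (2 : ℂ) • G := by
      rw [hG, Finset.smul_sum]
      exact Finset.sum_congr rfl fun m _ => by push_cast; rw [smul_smul]
    have S3 : ∑ _m : Fin d, G = ((d : ℝ) : ℂ) • G := by
      rw [Finset.sum_const, Finset.card_univ, Fintype.card_fin]
      push_cast
      rw [← Nat.cast_smul_eq_nsmul ℂ]
    have S4 : ∑ m : Fin d, ((y m : ℂ) * (c : ℂ)) • F m = (c : ℂ) • G := by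
      rw [hG, Finset.smul_sum]
      exact Finset.sum_congr rfl fun m _ => by rw [smul_smul, mul_comm]
    have S5 : ∑ m : Fin d, (y m : ℂ) • (G * F m) = ((‖y‖ ^ 2 : ℝ) : ℂ) • 1 := by
      rw [← hGG]
      conv_rhs => rw [hG, Finset.mul_sum]
      exact Finset.sum_congr rfl fun m _ => (mul_smul_comm _ _ _).symm
    simp only [Finset.sum_add_distrib, Finset.sum_sub_distrib, S1, S2, S3, S4, S5, hM]
    -- now a pure module identity with scalar side conditions
    have hlamC : ((lam : ℝ) : ℂ) = (s : ℂ) + 1 := by rw [hlam]; push_cast; ring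
    have hcC : ((c : ℝ) : ℂ) = (s : ℂ) + (d : ℂ) - 1 := by rw [hc]; push_cast; ring
    have hs2C : ((s : ℝ) : ℂ) ^ 2 = ((‖y‖ : ℝ) : ℂ) ^ 2 + ((d : ℂ) - 1) ^ 2 := by
      exact_mod_cast congrArg (fun t : ℝ => (t : ℂ)) hs2
    match_scalars
    · push_cast
      linear_combination (-((c : ℝ) : ℂ)) * hlamC + ((d : ℂ) - 1 - (s : ℂ)) * hcC - hs2C
    · push_cast
      linear_combination hlamC - hcC
  -- the eigenvector
  have hnpos : 0 < n := pow_pos (by norm_num) _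
  set A : Matrix (Fin n × Fin n) (Fin n × Fin n) ℂ :=
    ∑ j : Fin d, (F j - (y j : ℂ) • 1) ⊗ₖ F j with hA
  set x : (Fin n × Fin n) → ℂ := fun p => M p.1 p.2 with hx
  have hAx : A *ᵥ x = ((lam : ℝ) : ℂ) • x := by
    rw [hA, sum_mulVec']
    have e : ∀ j ∈ (Finset.univ : Finset (Fin d)), ((F j - (y j : ℂ) • 1) ⊗ₖ F j) *ᵥ x
        = fun p => (((F j - (y j : ℂ) • 1) * (M * F j)) p.1 p.2 : ℂ) := by
      intro j _
      rw [hx, kron_mulVec, show (F j)ᵀ = F j from Fmat_transpose d j, mul_assoc]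
    rw [Finset.sum_congr rfl e]
    ext p
    rw [Finset.sum_apply]
    simp only [Pi.smul_apply, hx]
    rw [← Matrix.sum_apply p.1 p.2 Finset.univ (fun j => (F j - (y j : ℂ) • 1) * (M * F j)),
      key, Matrix.smul_apply]
  set v : EuclideanSpace ℂ (Fin n × Fin n) := (WithLp.equiv 2 _).symm x with hv
  have hTv : Matrix.toEuclideanCLM (𝕜 := ℂ) A v = ((lam : ℝ) : ℂ) • v := by
    rw [hv, WithLp.equiv_symm_apply, Matrix.toEuclideanCLM_toLp, hAx,
      WithLp.toLp_smul]
  have hvne : v ≠ 0 := by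
    intro h0
    have hx0 : x = 0 :=
      (WithLp.equiv 2 ((Fin n × Fin n) → ℂ)).symm.injective
        (h0.trans (WithLp.toLp_zero (p := 2) (V := (Fin n × Fin n) → ℂ)).symm)
    have hM0 : M = 0 := by
      ext i k
      exact congrFun hx0 (i, k)
    have hGc : (c : ℂ) • (1 : Matrix (Fin n) (Fin n) ℂ) = G := by
      rwa [hM, sub_eq_zero] at hM0
    have hEq : ((c : ℂ) * (c : ℂ)) • (1 : Matrix (Fin n) (Fin n) ℂ)
        = ((‖y‖ ^ 2 : ℝ) : ℂ) • 1 := by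
      rw [← hGG, ← hGc, smul_mul_assoc, one_mul, smul_smul]
    have hent := congrArg (fun (X : Matrix (Fin n) (Fin n) ℂ) => X ⟨0, hnpos⟩ ⟨0, hnpos⟩) hEq
    simp only [Matrix.smul_apply, Matrix.one_apply_eq, smul_eq_mul, mul_one] at hent
    have hcr : c * c = ‖y‖ ^ 2 := by exact_mod_cast hent
    have hsy : ‖y‖ ≤ s := by nlinarith [hs2, hs0, norm_nonneg y]
    have hd' : (2 : ℝ) ≤ (d : ℝ) := by exact_mod_cast hd
    nlinarith [norm_nonneg y]
  have hvpos : 0 < ‖v‖ := norm_pos_iff.mpr hvne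
  have hle := (Matrix.toEuclideanCLM (𝕜 := ℂ) A).le_opNorm v
  rw [hTv, norm_smul] at hle
  simp only [Complex.norm_real, Real.norm_eq_abs] at hle
  rw [abs_of_nonneg (by rw [hlam]; positivity)] at hle
  have hfin : lam ≤ ‖Matrix.toEuclideanCLM (𝕜 := ℂ) A‖ :=
    le_of_mul_le_mul_right (by linarith [hle]) hvpos
  calc Real.sqrt (‖y‖ ^ 2 + ((d : ℝ) - 1) ^ 2) + 1 = lam := by rw [hlam, hs]
    _ ≤ _ := hfin
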